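/- (Bloch's theorem, form used) There exists a universal constant 0 < θ < 1 such that: for every r > 0 and every holomorphic function f : Δ_r(0) → ℂ with |f'(0)| = 1, there exist b ∈ ℂ and a holomorphic function g : Δ_{θr}(b) → Δ_r(0) with f(g(λ)) = λ for all λ ∈ Δ_{θr}(b). -/

import Mathlib

open Metric Set

noncomputable def kob {E : Type*} [NormedAddCommGroup E] [NormedSpace ℂ E]
    (Ω : Set E) (z v : E) : ℝ :=
  sInf {c : ℝ | ∃ r : ℝ, 0 < r ∧ c = 1 / r ∧ ∃ f : ℂ → E,
    DifferentiableOn ℂ f (ball (0 : ℂ) r) ∧ f 0 = z ∧ deriv f 0 = v ∧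
    MapsTo f (ball (0 : ℂ) r) Ω}

/-- A set `Ω` is Kobayashi hyperbolic if around every point the Kobayashi
pseudometric admits a positive lower bound comparable to the norm. -/
def KobayashiHyperbolic {E : Type*} [NormedAddCommGroup E] [NormedSpace ℂ E]
    (Ω : Set E) : Prop :=
  ∀ p ∈ Ω, ∃ U ∈ nhds p, ∃ c > 0, ∀ q ∈ U ∩ Ω, ∀ v : E, c * ‖v‖ ≤ kob Ω q v

/-- Sub-mean value inequality on all closed disks contained in `S`. -/
def SubmeanOn (u : ℂ → ℝ) (S : Set ℂ) : Prop :=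
  ∀ c : ℂ, ∀ s : ℝ, 0 < s → closedBall c s ⊆ S →
    u c ≤ (2 * Real.pi)⁻¹ *
      ∫ θ in (0 : ℝ)..(2 * Real.pi), u (c + (s : ℂ) * Complex.exp ((θ : ℂ) * Complex.I))

def SubharmonicOn (u : ℂ → ℝ) (S : Set ℂ) : Prop :=
  UpperSemicontinuousOn u S ∧ SubmeanOn u S

/-- Plurisubharmonic: upper semicontinuous and subharmonic on every complex line. -/
def PSHOn {E : Type*} [NormedAddCommGroup E] [NormedSpace ℂ E]
    (u : E → ℝ) (Ω : Set E) : Prop :=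
  UpperSemicontinuousOn u Ω ∧
    ∀ a b : E, SubmeanOn (fun lam : ℂ => u (a + lam • b)) {lam : ℂ | a + lam • b ∈ Ω}

open Function

/-- Core Bloch lemma for the unit disk with explicit constant 1/256. -/
lemma bloch_core (f : ℂ → ℂ) (hf : DifferentiableOn ℂ f (ball (0:ℂ) 1))
    (h1 : ‖deriv f 0‖ = 1) :
    ∃ b : ℂ, ∃ g : ℂ → ℂ,
      DifferentiableOn ℂ g (ball b (1/256)) ∧
      MapsTo g (ball b (1/256)) (ball (0:ℂ) 1) ∧
      ∀ lam ∈ ball b (1/256), f (g lam) = lam := by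
  have han : AnalyticOnNhd ℂ f (ball (0:ℂ) 1) := hf.analyticOnNhd isOpen_ball
  have hderivan : AnalyticOnNhd ℂ (deriv f) (ball (0:ℂ) 1) := han.deriv
  have hdc : ContinuousOn (deriv f) (ball (0:ℂ) 1) := hderivan.continuousOn
  have hdd : DifferentiableOn ℂ (deriv f) (ball (0:ℂ) 1) := hderivan.differentiableOn
  have hhalf : closedBall (0:ℂ) (1/2) ⊆ ball (0:ℂ) 1 := closedBall_subset_ball (by norm_num)
  -- maximize u
  set u : ℂ → ℝ := fun z => (1/2 - ‖z‖) * ‖deriv f z‖ with hu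
  have hucont : ContinuousOn u (closedBall (0:ℂ) (1/2)) := by
    apply ContinuousOn.mul
    · exact (continuous_const.sub continuous_norm).continuousOn
    · exact (hdc.mono hhalf).norm
  obtain ⟨p, hp, hmax⟩ := (isCompact_closedBall (0:ℂ) (1/2)).exists_isMaxOn
    ⟨0, by simp⟩ hucont
  have hK : (1/2 : ℝ) ≤ u p := by
    have h0 : (0:ℂ) ∈ closedBall (0:ℂ) (1/2) := by simp
    have h2 : u 0 ≤ u p := hmax h0
    have h3 : u 0 = 1/2 := by
      show (1/2 - ‖(0:ℂ)‖) * ‖deriv f 0‖ = 1/2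
      rw [h1]; simp
    linarith
  set m : ℝ := ‖deriv f p‖ with hm
  set t : ℝ := 1/2 - ‖p‖ with htdef
  have hKtm : u p = t * m := rfl
  have ht : 0 < t := by
    by_contra h
    push_neg at h
    nlinarith [norm_nonneg (deriv f p), hK]
  have hmpos : 0 < m := by nlinarith [hK]
  have hp' : ‖p‖ ≤ 1/2 := by simpa using hp
  -- ball p (t/2) inside closedBall 0 (1/2)
  have hsub : ball p (t/2) ⊆ closedBall (0:ℂ) (1/2) := by
    intro z hz
    simp only [mem_ball, dist_eq_norm] at hz
    have : ‖z‖ ≤ ‖z - p‖ + ‖p‖ := by simpa using norm_add_le (z - p) p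
    simp only [mem_closedBall, dist_zero_right]
    nlinarith
  have hsub1 : ball p (t/2) ⊆ ball (0:ℂ) 1 := hsub.trans hhalf
  -- derivative bound 2m on ball p (t/2)
  have bound2m : ∀ z ∈ ball p (t/2), ‖deriv f z‖ ≤ 2 * m := by
    intro z hz
    have h2 : (1/2 - ‖z‖) * ‖deriv f z‖ ≤ (1/2 - ‖p‖) * ‖deriv f p‖ := hmax (hsub hz)
    have hz' : ‖z - p‖ < t/2 := by simpa [mem_ball, dist_eq_norm] using hz
    have hzn : ‖z‖ < 1/2 - t/2 := by
      have : ‖z‖ ≤ ‖z - p‖ + ‖p‖ := by simpa using norm_add_le (z - p) p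
      nlinarith
    have h11 : (t/2) * ‖deriv f z‖ ≤ (1/2 - ‖z‖) * ‖deriv f z‖ :=
      mul_le_mul_of_nonneg_right (by linarith) (norm_nonneg _)
    nlinarith [norm_nonneg (deriv f z), ht]
  -- Schwarz on φ = deriv f - const
  have hφdiff : DifferentiableOn ℂ (fun z => deriv f z - deriv f p) (ball p (t/2)) :=
    (hdd.mono hsub1).sub_const _
  have hφmaps : MapsTo (fun z => deriv f z - deriv f p) (ball p (t/2))
      (ball ((fun z => deriv f z - deriv f p) p) (4*m)) := by
    intro z hz
    simp only [mem_ball, sub_self, dist_eq_norm, sub_zero]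
    have h3 : ‖deriv f z - deriv f p‖ ≤ ‖deriv f z‖ + ‖deriv f p‖ := norm_sub_le _ _
    have := bound2m z hz
    nlinarith
  have schwarz : ∀ z ∈ ball p (t/2),
      ‖deriv f z - deriv f p‖ ≤ (4*m)/(t/2) * ‖z - p‖ := by
    intro z hz
    have := Complex.dist_le_div_mul_dist_of_mapsTo_ball hφdiff (hφmaps.mono_right ball_subset_closedBall) hz
    simpa [dist_eq_norm] using this
  set ρ : ℝ := t/16 with hρ
  have hρpos : 0 < ρ := by positivity
  have hρsub : ball p ρ ⊆ ball p (t/2) := ball_subset_ball (by nlinarith)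
  have csmall : ∀ z ∈ ball p ρ, ‖deriv f z - deriv f p‖ ≤ m/2 := by
    intro z hz
    have h4 := schwarz z (hρsub hz)
    have hz' : ‖z - p‖ < ρ := by simpa [mem_ball, dist_eq_norm] using hz
    have h5 : (4*m)/(t/2) * ‖z - p‖ ≤ (4*m)/(t/2) * ρ := by
      apply mul_le_mul_of_nonneg_left hz'.le
      positivity
    have h6 : (4*m)/(t/2) * ρ = m/2 := by
      field_simp [hρ]
      ring
    linarith
  -- lower Lipschitz bound on ball p ρ
  have hρ1 : ball p ρ ⊆ ball (0:ℂ) 1 := hρsub.trans hsub1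
  have lowerLip : ∀ z1 ∈ ball p ρ, ∀ z2 ∈ ball p ρ,
      (m/2) * ‖z1 - z2‖ ≤ ‖f z1 - f z2‖ := by
    intro z1 hz1 z2 hz2
    have hmv : ‖(f z1 - deriv f p * z1) - (f z2 - deriv f p * z2)‖ ≤ (m/2) * ‖z1 - z2‖ := by
      apply (convex_ball p ρ).norm_image_sub_le_of_norm_hasDerivWithin_le
        (f' := fun z => deriv f z - deriv f p) _ _ hz2 hz1
      · intro x hx
        have hfx : HasDerivAt f (deriv f x) x :=
          (hf.differentiableAt (isOpen_ball.mem_nhds (hρ1 hx))).hasDerivAt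
        have : HasDerivAt (fun z => f z - deriv f p * z) (deriv f x - deriv f p) x := by
          have h := hfx.sub ((hasDerivAt_id x).const_mul (deriv f p))
          rw [mul_one] at h
          exact h
        exact this.hasDerivWithinAt
      · exact fun x hx => csmall x hx
    have key : (f z1 - deriv f p * z1) - (f z2 - deriv f p * z2)
        = (f z1 - f z2) - deriv f p * (z1 - z2) := by ring
    rw [key] at hmv
    have h7 : ‖deriv f p * (z1 - z2)‖ - ‖f z1 - f z2‖
        ≤ ‖(f z1 - f z2) - deriv f p * (z1 - z2)‖ := by
      have := norm_sub_norm_le (deriv f p * (z1 - z2)) (f z1 - f z2)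
      calc ‖deriv f p * (z1 - z2)‖ - ‖f z1 - f z2‖
          ≤ ‖deriv f p * (z1 - z2) - (f z1 - f z2)‖ := this
        _ = ‖(f z1 - f z2) - deriv f p * (z1 - z2)‖ := by rw [norm_sub_rev]
    have h8 : ‖deriv f p * (z1 - z2)‖ = m * ‖z1 - z2‖ := by
      rw [norm_mul]
    nlinarith [norm_nonneg (z1 - z2)]
  set ρ' : ℝ := ρ/2 with hρ'
  have hρ'pos : 0 < ρ' := by positivity
  have hcb : closedBall p ρ' ⊆ ball p ρ := by
    apply closedBall_subset_ball; rw [hρ']; linarith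
  set b : ℂ := f p with hb
  -- sphere lower bound
  have hsphere : ∀ z ∈ sphere p ρ', (m/2) * ρ' ≤ ‖f z - f p‖ := by
    intro z hz
    have hz1 : z ∈ ball p ρ := hcb (sphere_subset_closedBall hz)
    have := lowerLip z hz1 p (mem_ball_self hρpos)
    have hzp : ‖z - p‖ = ρ' := by simpa [dist_eq_norm] using hz
    rw [hzp] at this
    exact this
  have hdco : DiffContOnCl ℂ f (ball p ρ') := by
    apply DifferentiableOn.diffContOnCl
    rw [closure_ball p hρ'pos.ne']
    exact hf.mono (hcb.trans hρ1)
  have hfreq : ∃ᶠ z in nhds p, f z ≠ f p := by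
    have hev : ∀ᶠ z in nhdsWithin p {p}ᶜ, f z ≠ f p := by
      have : ball p ρ ∩ {p}ᶜ ∈ nhdsWithin p {p}ᶜ :=
        Filter.inter_mem (mem_nhdsWithin_of_mem_nhds (isOpen_ball.mem_nhds (mem_ball_self hρpos)))
          self_mem_nhdsWithin
      filter_upwards [this] with z hz
      obtain ⟨hz1, hz2⟩ := hz
      have := lowerLip z hz1 p (mem_ball_self hρpos)
      have hne : z - p ≠ 0 := sub_ne_zero.mpr hz2
      have : 0 < ‖f z - f p‖ := by
        have h9 : 0 < ‖z - p‖ := norm_pos_iff.mpr hne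
        nlinarith
      intro h
      rw [h, sub_self, norm_zero] at this
      exact lt_irrefl 0 this
    exact (hev.frequently).filter_mono nhdsWithin_le_nhds
  have himg : ball b ((m/2) * ρ' / 2) ⊆ f '' closedBall p ρ' :=
    hdco.ball_subset_image_closedBall hρ'pos hsphere hfreq
  -- radius comparison: (m/2)*ρ'/2 = m*t/128 = u p/128 ≥ 1/256
  have hrad : (1/256 : ℝ) ≤ (m/2) * ρ' / 2 := by
    have : (m/2) * ρ' / 2 = t * m / 128 := by rw [hρ', hρ]; ring
    rw [this]
    rw [hKtm] at hK
    linarith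
  have himg' : ball b (1/256) ⊆ f '' closedBall p ρ' :=
    (ball_subset_ball hrad).trans himg
  -- define g
  set g : ℂ → ℂ := fun w => invFunOn f (closedBall p ρ') w with hg
  have hex : ∀ w ∈ ball b (1/256 : ℝ), ∃ a ∈ closedBall p ρ', f a = w := by
    intro w hw
    obtain ⟨z, hz, hfz⟩ := himg' hw
    exact ⟨z, hz, hfz⟩
  have hgmem : ∀ w ∈ ball b (1/256 : ℝ), g w ∈ closedBall p ρ' :=
    fun w hw => invFunOn_mem (hex w hw)
  have hfg : ∀ w ∈ ball b (1/256 : ℝ), f (g w) = w :=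
    fun w hw => invFunOn_eq (hex w hw)
  have hgρ : ∀ w ∈ ball b (1/256 : ℝ), g w ∈ ball p ρ := fun w hw => hcb (hgmem w hw)
  have hgmaps : MapsTo g (ball b (1/256)) (ball (0:ℂ) 1) :=
    fun w hw => hρ1 (hgρ w hw)
  -- g Lipschitz on the ball
  have hglip : LipschitzOnWith (Real.toNNReal (2/m)) g (ball b (1/256)) := by
    apply LipschitzOnWith.of_dist_le_mul
    intro w1 hw1 w2 hw2
    have h10 := lowerLip (g w1) (hgρ w1 hw1) (g w2) (hgρ w2 hw2)
    rw [hfg w1 hw1, hfg w2 hw2] at h10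
    rw [Real.coe_toNNReal _ (by positivity : (0:ℝ) ≤ 2/m)]
    simp only [dist_eq_norm]
    rw [div_mul_eq_mul_div, le_div_iff₀ hmpos]
    nlinarith
  have hgcont : ContinuousOn g (ball b (1/256)) := hglip.continuousOn
  -- differentiability of g
  refine ⟨b, g, ?_, hgmaps, hfg⟩
  intro w hw
  have hz1 : g w ∈ ball (0:ℂ) 1 := hgmaps hw
  have hfd : HasDerivAt f (deriv f (g w)) (g w) :=
    (hf.differentiableAt (isOpen_ball.mem_nhds hz1)).hasDerivAt
  have hne : deriv f (g w) ≠ 0 := by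
    intro h
    have := csmall (g w) (hgρ w hw)
    rw [h] at this
    simp only [zero_sub, norm_neg] at this
    nlinarith
  have hca : ContinuousAt g w := hgcont.continuousAt (isOpen_ball.mem_nhds hw)
  have hev : ∀ᶠ y in nhds w, f (g y) = y := by
    filter_upwards [isOpen_ball.mem_nhds hw] with y hy
    exact hfg y hy
  exact (HasDerivAt.of_local_left_inverse hca hfd hne hev).differentiableAt.differentiableWithinAt


/-- Bloch's theorem: there is a universal constant θ ∈ (0,1) such that every
holomorphic f : Δ_r(0) → ℂ with |f'(0)| = 1 admits a holomorphic right inverse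
g : Δ_{θr}(b) → Δ_r(0) for some b ∈ ℂ. -/
theorem stmt_16 :
    ∃ θ : ℝ, 0 < θ ∧ θ < 1 ∧
      ∀ r : ℝ, 0 < r → ∀ f : ℂ → ℂ,
        DifferentiableOn ℂ f (ball (0 : ℂ) r) →
        ‖deriv f 0‖ = 1 →
        ∃ b : ℂ, ∃ g : ℂ → ℂ,
          DifferentiableOn ℂ g (ball b (θ * r)) ∧
          MapsTo g (ball b (θ * r)) (ball (0 : ℂ) r) ∧
          ∀ lam ∈ ball b (θ * r), f (g lam) = lam := by
  refine ⟨1/256, by norm_num, by norm_num, ?_⟩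
  intro r hr f hf habs
  have hr0 : (r:ℂ) ≠ 0 := by
    simp only [ne_eq, Complex.ofReal_eq_zero]
    exact hr.ne'
  have hnr : ‖(r:ℂ)‖ = r := by
    rw [Complex.norm_real, Real.norm_of_nonneg hr.le]
  set F : ℂ → ℂ := fun z => (r:ℂ)⁻¹ * f ((r:ℂ) * z) with hF
  have hmaps1 : MapsTo (fun z : ℂ => (r:ℂ) * z) (ball (0:ℂ) 1) (ball (0:ℂ) r) := by
    intro z hz
    simp only [mem_ball, dist_zero_right] at hz ⊢
    rw [norm_mul, hnr]
    nlinarith [norm_nonneg z]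
  have hFdiff : DifferentiableOn ℂ F (ball (0:ℂ) 1) := by
    apply DifferentiableOn.const_mul
    exact hf.comp ((differentiable_id.const_mul ((r:ℂ))).differentiableOn) hmaps1
  have h0r : (0:ℂ) ∈ ball (0:ℂ) r := by
    simp only [mem_ball, dist_self]
    exact hr
  have hf0 : HasDerivAt f (deriv f 0) 0 :=
    (hf.differentiableAt (isOpen_ball.mem_nhds h0r)).hasDerivAt
  have hinner : HasDerivAt (fun z : ℂ => (r:ℂ)*z) (r:ℂ) 0 := by
    simpa using (hasDerivAt_id (0:ℂ)).const_mul (r:ℂ)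
  have hf0' : HasDerivAt f (deriv f 0) ((fun z : ℂ => (r:ℂ)*z) 0) := by
    simpa using hf0
  have hcomp : HasDerivAt (fun z : ℂ => f ((r:ℂ)*z)) (deriv f 0 * (r:ℂ)) 0 :=
    HasDerivAt.comp 0 hf0' hinner
  have hFd : HasDerivAt F ((r:ℂ)⁻¹ * (deriv f 0 * (r:ℂ))) 0 := hcomp.const_mul _
  have hFderiv : deriv F 0 = deriv f 0 := by
    rw [hFd.deriv]
    field_simp
  have hFnorm : ‖deriv F 0‖ = 1 := by
    rw [hFderiv, habs]
  obtain ⟨b₁, g₁, hg₁d, hg₁m, hg₁e⟩ := bloch_core F hFdiff hFnorm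
  refine ⟨(r:ℂ) * b₁, fun w => (r:ℂ) * g₁ ((r:ℂ)⁻¹ * w), ?_, ?_, ?_⟩
  · -- differentiability
    apply DifferentiableOn.const_mul
    apply hg₁d.comp ((differentiable_id.const_mul ((r:ℂ)⁻¹)).differentiableOn)
    intro w hw
    simp only [mem_ball, dist_eq_norm, id_eq] at hw ⊢
    have : (r:ℂ)⁻¹ * w - b₁ = (r:ℂ)⁻¹ * (w - (r:ℂ) * b₁) := by
      field_simp
    rw [this, norm_mul, norm_inv, hnr]
    rw [inv_mul_lt_iff₀ hr]
    linarith [hw]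
  · intro w hw
    have hw' : (r:ℂ)⁻¹ * w ∈ ball b₁ (1/256) := by
      simp only [mem_ball, dist_eq_norm] at hw ⊢
      have : (r:ℂ)⁻¹ * w - b₁ = (r:ℂ)⁻¹ * (w - (r:ℂ) * b₁) := by field_simp
      rw [this, norm_mul, norm_inv, hnr, inv_mul_lt_iff₀ hr]
      linarith [hw]
    have := hg₁m hw'
    simp only [mem_ball, dist_zero_right] at this ⊢
    rw [norm_mul, hnr]
    nlinarith
  · intro w hw
    have hw' : (r:ℂ)⁻¹ * w ∈ ball b₁ (1/256) := by
      simp only [mem_ball, dist_eq_norm] at hw ⊢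
      have : (r:ℂ)⁻¹ * w - b₁ = (r:ℂ)⁻¹ * (w - (r:ℂ) * b₁) := by field_simp
      rw [this, norm_mul, norm_inv, hnr, inv_mul_lt_iff₀ hr]
      linarith [hw]
    have hFe := hg₁e _ hw'
    have : f ((r:ℂ) * g₁ ((r:ℂ)⁻¹ * w)) = (r:ℂ) * F (g₁ ((r:ℂ)⁻¹ * w)) := by
      rw [hF]
      field_simp
    rw [this, hFe]
    field_simp
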